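/- Let u, v, w be points in ℝ² with w not on the line through u and v. For any two points b1, b2 in the open triangle with vertices u, v, w, the triangles conv{u,b1,v} and conv{u,b2,v} either satisfy conv{u,b1,v} ⊆ conv{u,b2,v}, conv{u,b2,v} ⊆ conv{u,b1,v}, or there exists a point b' ∈ ([u,b1] ∪ [b1,v]) ∩ ([u,b2] ∪ [b2,v]) with b' ∉ {u,v}. -/

import Mathlib

abbrev Pt := EuclideanSpace ℝ (Fin 2)

/-- Inclusion case: if the barycentric data satisfies `c2*t1 ≤ c1*t2` and
`(1-c2)*t1 ≤ (1-c1)*t2`, then `b1 ∈ conv {u, b2, v}`, hence the triangle inclusion. -/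
lemma stmt6_incl (u v w b1 b2 : Pt) (c1 t1 c2 t2 : ℝ)
    (hbe1 : b1 = (1 - c1 - t1) • u + c1 • v + t1 • w)
    (hbe2 : b2 = (1 - c2 - t2) • u + c2 • v + t2 • w)
    (ht1 : 0 < t1) (ht2 : 0 < t2) (hc1 : 0 < c1) (hc2 : 0 < c2)
    (hs2 : c2 + t2 < 1)
    (hA : c2 * t1 ≤ c1 * t2) (hB : (1 - c2) * t1 ≤ (1 - c1) * t2) :
    convexHull ℝ {u, b1, v} ⊆ convexHull ℝ {u, b2, v} := by
  set S := convexHull ℝ ({u, b2, v} : Set Pt) with hSdef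
  have hS : Convex ℝ S := convex_convexHull ℝ _
  have huS : u ∈ S := subset_convexHull ℝ _ (by simp)
  have hb2S : b2 ∈ S := subset_convexHull ℝ _ (by simp)
  have hvS : v ∈ S := subset_convexHull ℝ _ (by simp)
  have hp : (0:ℝ) < t1 + c1 * t2 - c2 * t1 := by nlinarith
  have hp' : t1 + c1 * t2 - c2 * t1 ≠ 0 := ne_of_gt hp
  have ht2' : t2 ≠ 0 := ne_of_gt ht2
  -- the point on segment [b2, v]
  have hq : (t1 / (t1 + c1 * t2 - c2 * t1)) • b2
      + ((c1 * t2 - c2 * t1) / (t1 + c1 * t2 - c2 * t1)) • v ∈ S := by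
    refine hS hb2S hvS (by positivity) (div_nonneg (by nlinarith) hp.le) ?_
    rw [← add_div, div_eq_one_iff_eq hp']
    ring
  have hmem : (1 - (t1 + c1 * t2 - c2 * t1) / t2) • u
      + ((t1 + c1 * t2 - c2 * t1) / t2) • ((t1 / (t1 + c1 * t2 - c2 * t1)) • b2
        + ((c1 * t2 - c2 * t1) / (t1 + c1 * t2 - c2 * t1)) • v) ∈ S := by
    refine hS huS hq ?_ (by positivity) (by ring)
    rw [sub_nonneg, div_le_one ht2]
    nlinarith
  have heq : b1 = (1 - (t1 + c1 * t2 - c2 * t1) / t2) • u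
      + ((t1 + c1 * t2 - c2 * t1) / t2) • ((t1 / (t1 + c1 * t2 - c2 * t1)) • b2
        + ((c1 * t2 - c2 * t1) / (t1 + c1 * t2 - c2 * t1)) • v) := by
    rw [hbe1, hbe2]
    have hp'' : t1 + c1 * t2 - t1 * c2 ≠ 0 := by rw [mul_comm t1 c2]; exact hp'
    match_scalars <;> field_simp <;> ring
  have hb1S : b1 ∈ S := heq ▸ hmem
  refine convexHull_min ?_ hS
  refine Set.insert_subset_iff.2 ⟨huS, Set.insert_subset_iff.2 ⟨hb1S, ?_⟩⟩
  simpa using hvS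

/-- Crossing case: if `c1*t2 ≤ c2*t1` and `(1-c2)*t1 ≤ (1-c1)*t2`, the segments
`[b1, v]` and `[u, b2]` meet in a point distinct from `u` and `v`. -/
lemma stmt6_cross (u v w b1 b2 : Pt) (c1 t1 c2 t2 : ℝ)
    (hbe1 : b1 = (1 - c1 - t1) • u + c1 • v + t1 • w)
    (hbe2 : b2 = (1 - c2 - t2) • u + c2 • v + t2 • w)
    (ht1 : 0 < t1) (ht2 : 0 < t2) (hc1 : 0 < c1) (hc2 : 0 < c2)
    (hs1 : c1 + t1 < 1) (hs2 : c2 + t2 < 1)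
    (hb1v : b1 ≠ v) (hb2u : b2 ≠ u)
    (hA : c1 * t2 ≤ c2 * t1) (hB : (1 - c2) * t1 ≤ (1 - c1) * t2) :
    ∃ b' : Pt, b' ∈ segment ℝ b1 v ∧ b' ∈ segment ℝ u b2 ∧ b' ≠ u ∧ b' ≠ v := by
  set D := t2 * (1 - c1) + t1 * c2 with hDdef
  have hD : (0:ℝ) < D := by nlinarith
  have hD' : D ≠ 0 := ne_of_gt hD
  refine ⟨(1 - t1 / D) • u + (t1 / D) • b2, ?_, ?_, ?_, ?_⟩
  · -- membership in segment [b1, v]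
    refine ⟨t2 / D, 1 - t2 / D, by positivity, ?_, by ring, ?_⟩
    · rw [sub_nonneg, div_le_one hD]
      nlinarith
    · rw [hbe1, hbe2]
      match_scalars <;> field_simp <;> ring
  · -- membership in segment [u, b2]
    refine ⟨1 - t1 / D, t1 / D, ?_, by positivity, by ring, rfl⟩
    rw [sub_nonneg, div_le_one hD]
    nlinarith
  · -- not equal to u
    intro h
    apply hb2u
    have h2 : (t1 / D) • (b2 - u) = ((1 - t1 / D) • u + (t1 / D) • b2) - u := by module
    rw [h, sub_self] at h2
    have := smul_eq_zero.mp h2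
    rcases this with h3 | h3
    · exact absurd h3 (by positivity)
    · exact sub_eq_zero.mp h3
  · -- not equal to v
    intro h
    apply hb1v
    have heq2 : (1 - t1 / D) • u + (t1 / D) • b2 = (t2 / D) • b1 + (1 - t2 / D) • v := by
      rw [hbe1, hbe2]
      match_scalars <;> field_simp <;> ring
    have h2 : (t2 / D) • (b1 - v) = ((t2 / D) • b1 + (1 - t2 / D) • v) - v := by module
    rw [← heq2, h, sub_self] at h2
    rcases smul_eq_zero.mp h2 with h3 | h3
    · exact absurd h3 (by positivity)
    · exact sub_eq_zero.mp h3

theorem stmt_6 (u v w : Pt) (hw : w ∉ affineSpan ℝ ({u, v} : Set Pt))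
    (b1 b2 : Pt) (hb1 : b1 ∈ interior (convexHull ℝ {u, v, w}))
    (hb2 : b2 ∈ interior (convexHull ℝ {u, v, w})) :
    convexHull ℝ {u, b1, v} ⊆ convexHull ℝ {u, b2, v} ∨
      convexHull ℝ {u, b2, v} ⊆ convexHull ℝ {u, b1, v} ∨
      ∃ b' : Pt, b' ∈ (segment ℝ u b1 ∪ segment ℝ b1 v) ∩
          (segment ℝ u b2 ∪ segment ℝ b2 v) ∧ b' ∉ ({u, v} : Set Pt) := by
  -- the affine span is everything
  have hspan : affineSpan ℝ ({u, v, w} : Set Pt) = ⊤ :=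
    affineSpan_eq_top_of_nonempty_interior ⟨b1, hb1⟩
  -- affine independence
  have hindep : AffineIndependent ℝ ![u, v, w] := by
    rw [affineIndependent_iff_not_collinear_set]
    intro hc
    have h1 : Module.finrank ℝ (vectorSpan ℝ ({u, v, w} : Set Pt)) ≤ 1 :=
      collinear_iff_finrank_le_one.1 hc
    have h2 : vectorSpan ℝ ({u, v, w} : Set Pt) = ⊤ := by
      rw [← direction_affineSpan, hspan]
      exact AffineSubspace.direction_top ℝ _ _
    rw [h2] at h1
    have h3 : Module.finrank ℝ Pt = 2 := finrank_euclideanSpace_fin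
    rw [finrank_top] at h1
    omega
  have hrange : Set.range ![u, v, w] = ({u, v, w} : Set Pt) := by
    ext x
    simp [Matrix.range_cons, Matrix.range_empty]
    tauto
  let B : AffineBasis (Fin 3) ℝ Pt := ⟨![u, v, w], hindep, by rw [hrange]; exact hspan⟩
  have hB0 : B 0 = u := rfl
  have hB1 : B 1 = v := rfl
  have hB2 : B 2 = w := rfl
  have hrangeB : Set.range ⇑B = ({u, v, w} : Set Pt) := hrange
  have hposmem : ∀ x : Pt, x ∈ interior (convexHull ℝ ({u, v, w} : Set Pt)) →
      ∀ i, 0 < B.coord i x := by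
    intro x hx i
    have := B.interior_convexHull
    rw [hrangeB] at this
    rw [this] at hx
    exact hx i
  have hpos1 := hposmem b1 hb1
  have hpos2 := hposmem b2 hb2
  -- coordinates
  set c1 := B.coord 1 b1 with hc1def
  set t1 := B.coord 2 b1 with ht1def
  set c2 := B.coord 1 b2 with hc2def
  set t2 := B.coord 2 b2 with ht2def
  have hsum1 : B.coord 0 b1 + c1 + t1 = 1 := by
    have := B.sum_coord_apply_eq_one b1
    rwa [Fin.sum_univ_three] at this
  have hsum2 : B.coord 0 b2 + c2 + t2 = 1 := by
    have := B.sum_coord_apply_eq_one b2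
    rwa [Fin.sum_univ_three] at this
  have hbe1 : b1 = (1 - c1 - t1) • u + c1 • v + t1 • w := by
    have h := B.linear_combination_coord_eq_self b1
    rw [Fin.sum_univ_three, hB0, hB1, hB2] at h
    rw [← h]
    have : B.coord 0 b1 = 1 - c1 - t1 := by linarith
    rw [this]
  have hbe2 : b2 = (1 - c2 - t2) • u + c2 • v + t2 • w := by
    have h := B.linear_combination_coord_eq_self b2
    rw [Fin.sum_univ_three, hB0, hB1, hB2] at h
    rw [← h]
    have : B.coord 0 b2 = 1 - c2 - t2 := by linarith
    rw [this]
  have ht1 : 0 < t1 := hpos1 2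
  have ht2 : 0 < t2 := hpos2 2
  have hc1 : 0 < c1 := hpos1 1
  have hc2 : 0 < c2 := hpos2 1
  have ha1 : 0 < B.coord 0 b1 := hpos1 0
  have ha2 : 0 < B.coord 0 b2 := hpos2 0
  have hs1 : c1 + t1 < 1 := by linarith
  have hs2 : c2 + t2 < 1 := by linarith
  -- b1, b2 are distinct from u and v
  have hb1u : b1 ≠ u := by
    intro h
    have : (0:ℝ) < B.coord 2 b1 := ht1
    rw [h, ← hB0, B.coord_apply] at this
    rw [if_neg (by decide)] at this
    exact lt_irrefl 0 this
  have hb1v : b1 ≠ v := by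
    intro h
    have : (0:ℝ) < B.coord 2 b1 := ht1
    rw [h, ← hB1, B.coord_apply] at this
    rw [if_neg (by decide)] at this
    exact lt_irrefl 0 this
  have hb2u : b2 ≠ u := by
    intro h
    have : (0:ℝ) < B.coord 2 b2 := ht2
    rw [h, ← hB0, B.coord_apply] at this
    rw [if_neg (by decide)] at this
    exact lt_irrefl 0 this
  have hb2v : b2 ≠ v := by
    intro h
    have : (0:ℝ) < B.coord 2 b2 := ht2
    rw [h, ← hB1, B.coord_apply] at this
    rw [if_neg (by decide)] at this
    exact lt_irrefl 0 this
  -- main case analysis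
  rcases le_total (c2 * t1) (c1 * t2) with hA | hA <;>
    rcases le_total ((1 - c2) * t1) ((1 - c1) * t2) with hBc | hBc
  · -- b1 ∈ conv {u, b2, v}
    exact Or.inl (stmt6_incl u v w b1 b2 c1 t1 c2 t2 hbe1 hbe2 ht1 ht2 hc1 hc2 hs2 hA hBc)
  · -- crossing with roles swapped: [b2, v] meets [u, b1]
    obtain ⟨b', hm1, hm2, hbu, hbv⟩ :=
      stmt6_cross u v w b2 b1 c2 t2 c1 t1 hbe2 hbe1 ht2 ht1 hc2 hc1 hs2 hs1 hb2v hb1u hA hBc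
    refine Or.inr (Or.inr ⟨b', ⟨Or.inl hm2, Or.inr hm1⟩, ?_⟩)
    simp only [Set.mem_insert_iff, Set.mem_singleton_iff]
    push_neg
    exact ⟨hbu, hbv⟩
  · -- crossing: [b1, v] meets [u, b2]
    obtain ⟨b', hm1, hm2, hbu, hbv⟩ :=
      stmt6_cross u v w b1 b2 c1 t1 c2 t2 hbe1 hbe2 ht1 ht2 hc1 hc2 hs1 hs2 hb1v hb2u hA hBc
    refine Or.inr (Or.inr ⟨b', ⟨Or.inr hm1, Or.inl hm2⟩, ?_⟩)
    simp only [Set.mem_insert_iff, Set.mem_singleton_iff]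
    push_neg
    exact ⟨hbu, hbv⟩
  · -- b2 ∈ conv {u, b1, v}
    exact Or.inr (Or.inl
      (stmt6_incl u v w b2 b1 c2 t2 c1 t1 hbe2 hbe1 ht2 ht1 hc2 hc1 hs1 hA hBc))
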